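/- Any \(4d\times 4d\) matrix of the covariant form \(\mathcal{A}=\begin{pmatrix}A_{11}&I-A_{11}&A_{13}&A_{13}\\A_{21}&-A_{21}&I-A_{11}^T&-A_{11}^T\\0&0&I&I\\-I&I&0&0\end{pmatrix}\), with \(A_{13}=A_{13}^T\) and \(A_{21}=A_{21}^T\), is symplectic, i.e. \(\mathcal{A}^T J_{2d}\mathcal{A}=J_{2d}\). -/

import Mathlib

open Matrix

/-- The standard symplectic matrix `J_{2d} = [[0, I_{2d}],[-I_{2d}, 0]]` in `ℝ^{4d×4d}`. -/
def stdJ2 (d : ℕ) :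
    Matrix ((Fin d ⊕ Fin d) ⊕ (Fin d ⊕ Fin d)) ((Fin d ⊕ Fin d) ⊕ (Fin d ⊕ Fin d)) ℝ :=
  Matrix.fromBlocks 0 1 (-1) 0

/-- Any matrix of the covariant form
`[[A11, I-A11, A13, A13],[A21, -A21, I-A11ᵀ, -A11ᵀ],[0,0,I,I],[-I,I,0,0]]`,
with `A13, A21` symmetric, is symplectic. -/
theorem covariant_form_symplectic (d : ℕ) (A11 A13 A21 : Matrix (Fin d) (Fin d) ℝ)
    (h13 : A13ᵀ = A13) (h21 : A21ᵀ = A21) :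
    (Matrix.fromBlocks
      (Matrix.fromBlocks A11 (1 - A11) A21 (-A21))
      (Matrix.fromBlocks A13 A13 (1 - A11ᵀ) (-A11ᵀ))
      (Matrix.fromBlocks 0 0 (-1) 1)
      (Matrix.fromBlocks 1 1 0 0))ᵀ * stdJ2 d *
    Matrix.fromBlocks
      (Matrix.fromBlocks A11 (1 - A11) A21 (-A21))
      (Matrix.fromBlocks A13 A13 (1 - A11ᵀ) (-A11ᵀ))
      (Matrix.fromBlocks 0 0 (-1) 1)
      (Matrix.fromBlocks 1 1 0 0) = stdJ2 d := by
  simp only [stdJ2, Matrix.fromBlocks_transpose, Matrix.fromBlocks_multiply,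
    Matrix.transpose_sub, Matrix.transpose_one, Matrix.transpose_zero, Matrix.transpose_neg, Matrix.transpose_transpose,
    h13, h21, Matrix.mul_one, Matrix.one_mul, Matrix.mul_zero, Matrix.zero_mul,
    Matrix.mul_neg, Matrix.neg_mul, zero_add, add_zero, neg_zero,
    neg_neg, sub_mul, mul_sub]
  simp only [Matrix.fromBlocks_neg, Matrix.fromBlocks_add]
  abel_nf
  simp [Matrix.fromBlocks_one, Matrix.fromBlocks_zero]
  rw [← neg_zero, ← Matrix.fromBlocks_neg, Matrix.fromBlocks_one]
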